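/- Let d ≥ 2 and Λ ⊂ ℤ^d be finite. Let Ω^{2Λ^g} be the Grassmann algebra with generators {ψ_v, ψ̄_v : v ∈ Λ ∪ {g}}, where g is an extra ('ghost') symbol, and let Δ^g be the (Λ∪{g})×(Λ∪{g}) matrix with Δ^g(u,v) = Δ_Λ(u,v) for u,v ∈ Λ, Δ^g(u,g) = Δ^g(g,u) = |{w ∈ ∂^exΛ : w ∼ u}| for u ∈ Λ, and Δ^g(g,g) = −|∂^inΛ|. Then for every F in the subalgebra of Ω^{2Λ^g} generated by {ψ_v, ψ̄_v : v ∈ Λ}: (∏_{v∈Λ∪{g}} ∂_{ψ̄_v}∂_{ψ_v}) ψ_g ψ̄_g · exp(∑_{u,v∈Λ∪{g}} ψ_u (−Δ^g)(u,v) ψ̄_v + ψ_g ψ̄_g) · F = (∏_{v∈Λ} ∂_{ψ̄_v}∂_{ψ_v}) exp(∑_{u,v∈Λ} ψ_u (−Δ_Λ)(u,v) ψ̄_v) · F. That is, the pinned and the Dirichlet unnormalized fermionic Gaussian free field states agree on observables depending only on Λ. -/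
import Mathlib


/-!
Common setup: the hypercubic lattice ℤ^d, its Laplacian, Green's function, discrete
gradients; the Grassmann algebra with generators `ψ_v, ψ̄_v` indexed by lattice points
and a ghost vertex (`Option` with `none` = ghost), realized as an exterior algebra;
left derivatives as contractions; Berezin integrals; the (un)normalized Dirichlet
fermionic Gaussian free field state; fields X, Y; wired spanning trees; cumulants.
Products of (mathematically commuting) elements over a `Finset` are taken in the
arbitrary-but-fixed order provided by `Finset.toList`, and sums over collections that
are finite but not packaged as `Finset`s are `finsum`s.
-/

noncomputable section
open scoped BigOperators

namespace Sandpile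

variable (d : ℕ)

/-- Vertices of ℤ^d. -/
abbrev Vtx := Fin d → ℤ

/-- The `2d` coordinate directions `e_1,…,e_d,−e_1,…,−e_d`. -/
def Eo : Finset (Vtx d) :=
  (Finset.univ.image fun i : Fin d => Pi.single i (1 : ℤ)) ∪
    (Finset.univ.image fun i : Fin d => Pi.single i (-1 : ℤ))

/-- Nearest-neighbor adjacency in ℤ^d. -/
def adj (u v : Vtx d) : Prop := u - v ∈ Eo d

instance : DecidablePred fun p : Vtx d × Vtx d => adj d p.1 p.2 := fun _ => by
  unfold adj; infer_instance

instance (u v : Vtx d) : Decidable (adj d u v) := by unfold adj; infer_instance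

/-- Exterior boundary `∂^ex Λ`. -/
def extBdry (Λ : Finset (Vtx d)) : Set (Vtx d) :=
  {u | u ∉ Λ ∧ ∃ v ∈ Λ, adj d u v}

/-- Interior `Λ^in = Λ ∖ ∂^in Λ`: the points of `Λ` all of whose neighbors lie in `Λ`. -/
def interior (Λ : Finset (Vtx d)) : Set (Vtx d) :=
  {u | u ∈ Λ ∧ ∀ v, adj d u v → v ∈ Λ}

/-- The entries of `−Δ_Λ` (for `u, v` ranging over `Λ`): the matrix of the negative
Laplacian, `2d` on the diagonal, `−1` between nearest neighbors, `0` otherwise. -/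
def negLap (u v : Vtx d) : ℝ := if u = v then (2 * d : ℝ) else if adj d u v then -1 else 0

/-- The matrix `−Δ_Λ`. -/
def lapM (Λ : Finset (Vtx d)) : Matrix {x // x ∈ Λ} {x // x ∈ Λ} ℝ :=
  fun u v => negLap d u v

/-- The Green's function `G_Λ = (−Δ_Λ)⁻¹`, extended by `0` to ℤ^d × ℤ^d. -/
def green (Λ : Finset (Vtx d)) (u v : Vtx d) : ℝ :=
  if h : u ∈ Λ ∧ v ∈ Λ then (lapM d Λ)⁻¹ ⟨u, h.1⟩ ⟨v, h.2⟩ else 0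

/-- Discrete double gradient `∇^{(1)}_e ∇^{(2)}_{e'} G (u,v)`. -/
def dgrad (G : Vtx d → Vtx d → ℝ) (e e' u v : Vtx d) : ℝ :=
  G (u + e) (v + e') - G (u + e) v - G u (v + e') + G u v

/-- A good set: no two vertices are nearest neighbors, and every other site of `Λ` is
joined to `∂^ex Λ` by a nearest-neighbor path avoiding `V` (through `Λ^g`). -/
def goodSet (Λ V : Finset (Vtx d)) : Prop :=
  (∀ u ∈ V, ∀ v ∈ V, ¬adj d u v) ∧
    ∀ w ∈ Λ, w ∉ V →
      ∃ b ∈ extBdry d Λ,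
        (SimpleGraph.fromRel fun x y =>
            adj d x y ∧ (x ∈ (↑Λ : Set (Vtx d)) ∪ extBdry d Λ) ∧
              (y ∈ (↑Λ : Set (Vtx d)) ∪ extBdry d Λ) ∧ x ∉ V ∧ y ∉ V).Reachable w b

/-! ### The Grassmann algebra over `Λ ∪ {ghost}` -/

/-- Lattice vertices together with the ghost vertex (`none`). -/
abbrev GVtx := Option (Vtx d)

/-- The Grassmann algebra generated by `ψ_u` (`Sum.inl`) and `ψ̄_u` (`Sum.inr`). -/
abbrev GA := ExteriorAlgebra ℝ ((GVtx d ⊕ GVtx d) → ℝ)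

/-- The generator `ψ_u`. -/
def psi (u : GVtx d) : GA d := ExteriorAlgebra.ι ℝ (Pi.single (Sum.inl u) 1)

/-- The generator `ψ̄_u`. -/
def psibar (u : GVtx d) : GA d := ExteriorAlgebra.ι ℝ (Pi.single (Sum.inr u) 1)

/-- Left derivative w.r.t. the generator indexed by `x` (contraction with the
dual-basis functional). -/
def der (x : GVtx d ⊕ GVtx d) : Module.End ℝ (GA d) :=
  CliffordAlgebra.contractLeft (LinearMap.proj x)

/-- `∂_{ψ̄_u} ∂_{ψ_u}`. -/
def D (u : GVtx d) : Module.End ℝ (GA d) := der d (Sum.inr u) * der d (Sum.inl u)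

/-- The Berezin integral `∏_{u ∈ S} ∂_{ψ̄_u}∂_{ψ_u}`; the factors pairwise commute, so
the order (here the one provided by `Finset.toList`) is immaterial. -/
def berezin (S : Finset (GVtx d)) : Module.End ℝ (GA d) :=
  (S.toList.map fun u => D d u).prod

/-- `exp` of a Grassmann element: `∑_{k≥0} F^k/k!`, a finite sum for nilpotent `F`. -/
def gexp (F : GA d) : GA d := ∑ᶠ k : ℕ, (k.factorial : ℝ)⁻¹ • F ^ k

/-- The quadratic form `∑_{u,v ∈ Λ} ψ_u (−Δ_Λ)(u,v) ψ̄_v`. -/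
def dirQuad (Λ : Finset (Vtx d)) : GA d :=
  ∑ u ∈ Λ, ∑ v ∈ Λ, negLap d u v • (psi d (some u) * psibar d (some v))

/-- The unnormalized Dirichlet fGFF state, as an element of the Grassmann algebra. -/
def dstate (Λ : Finset (Vtx d)) (F : GA d) : GA d :=
  berezin d (Λ.image some) (gexp d (dirQuad d Λ) * F)

/-- The unnormalized Dirichlet fGFF state as a real number (the result of the full
Berezin integral is a scalar; `algebraMapInv` extracts it). -/
def dstateR (Λ : Finset (Vtx d)) (F : GA d) : ℝ :=
  ExteriorAlgebra.algebraMapInv (dstate d Λ F)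

/-- The normalized Dirichlet fGFF state `⟨⟨F⟩⟩_Λ = ⟨F⟩⁰_Λ / det(−Δ_Λ)`. -/
def nstate (Λ : Finset (Vtx d)) (F : GA d) : ℝ :=
  dstateR d Λ F / (lapM d Λ).det

/-- `∇_e ψ(v) = ψ_{v+e} − ψ_v`. -/
def gradPsi (v e : Vtx d) : GA d := psi d (some (v + e)) - psi d (some v)

/-- `∇_e ψ̄(v) = ψ̄_{v+e} − ψ̄_v`. -/
def gradPsibar (v e : Vtx d) : GA d := psibar d (some (v + e)) - psibar d (some v)

/-- The gradient-squared field `X_v = (2d)⁻¹ ∑_{e ∈ E_o} ∇_eψ(v) ∇_eψ̄(v)`. -/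
def X (v : Vtx d) : GA d :=
  (2 * d : ℝ)⁻¹ • ∑ e ∈ Eo d, gradPsi d v e * gradPsibar d v e

/-- The auxiliary field `Y_v = ∏_{e ∈ E_o} (1 − ∇_eψ(v) ∇_eψ̄(v))` (commuting factors,
taken in the `Finset.toList` order). -/
def Y (v : Vtx d) : GA d :=
  ((Eo d).toList.map fun e => 1 - gradPsi d v e * gradPsibar d v e).prod

/-- The product `∏_{v ∈ B} W_v` of (mathematically commuting) observables, taken in the
`Finset.toList` order. -/
def prodOver {α : Type*} (B : Finset α) (W : α → GA d) : GA d := (B.toList.map W).prod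

/-- Joint cumulants of the family `(W_v)_{v ∈ V}` with respect to the normalized
Dirichlet fGFF state. -/
def cumul (Λ V : Finset (Vtx d)) (W : Vtx d → GA d) : ℝ :=
  ∑ᶠ π : Finpartition V,
    ((π.parts.card - 1).factorial : ℝ) * (-1 : ℝ) ^ (π.parts.card - 1) *
      ∏ B ∈ π.parts, nstate d Λ (prodOver d B W)

/-! ### Wired spanning trees -/

/-- A wired spanning tree of `Λ`: a set of unordered nearest-neighbor edges, each with
an endpoint in `Λ`, of cardinality `|Λ|`, joining every vertex of `Λ` to `∂^ex Λ`. -/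
def IsWST (Λ : Finset (Vtx d)) (T : Finset (Sym2 (Vtx d))) : Prop :=
  (∀ e ∈ T, ∃ u v : Vtx d, e = s(u, v) ∧ adj d u v ∧ (u ∈ Λ ∨ v ∈ Λ)) ∧
    T.card = Λ.card ∧
      ∀ w ∈ Λ, ∃ b ∈ extBdry d Λ,
        (SimpleGraph.fromEdgeSet (↑T : Set (Sym2 (Vtx d)))).Reachable w b

/-- Probability of an event under the uniform measure on wired spanning trees. -/
def probWST (Λ : Finset (Vtx d)) (A : Finset (Sym2 (Vtx d)) → Prop) : ℝ :=
  ({T | IsWST d Λ T ∧ A T}.ncard : ℝ) / ({T | IsWST d Λ T}.ncard : ℝ)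

/-- Expectation under the uniform measure on wired spanning trees. -/
def expWST (Λ : Finset (Vtx d)) (φ : Finset (Sym2 (Vtx d)) → ℝ) : ℝ :=
  (∑ᶠ T ∈ {T | IsWST d Λ T}, φ T) / ({T | IsWST d Λ T}.ncard : ℝ)

/-- Joint cumulants of real observables under the uniform wired-spanning-tree measure. -/
def cumulWST (Λ V : Finset (Vtx d)) (W : Vtx d → Finset (Sym2 (Vtx d)) → ℝ) : ℝ :=
  ∑ᶠ π : Finpartition V,
    ((π.parts.card - 1).factorial : ℝ) * (-1 : ℝ) ^ (π.parts.card - 1) *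
      ∏ B ∈ π.parts, expWST d Λ fun T => ∏ v ∈ B, W v T

/-- The degree of `v` in the edge set `T`. -/
def degT (T : Finset (Sym2 (Vtx d))) (v : Vtx d) : ℕ := (T.filter fun e => v ∈ e).card

end Sandpile

namespace Sandpile

variable (d : ℕ)

/-- The number of neighbors of `u` lying in `∂^ex Λ`, i.e. `|{w ∈ ∂^ex Λ : w ∼ u}|`. -/
def extNbrCount (Λ : Finset (Vtx d)) (u : Vtx d) : ℕ :=
  ((((Eo d).image fun e => u + e)).filter fun w => w ∉ Λ).card

/-- The interior boundary `∂^in Λ`. -/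
def inBdry (Λ : Finset (Vtx d)) : Finset (Vtx d) :=
  Λ.filter fun u => ∃ e ∈ Eo d, u + e ∉ Λ

/-- The entries of `−Δ^g` over `Λ ∪ {g}` (`none` is the ghost `g`):
`Δ^g(u,v) = Δ_Λ(u,v)` on `Λ×Λ`, `Δ^g(u,g) = Δ^g(g,u) = |{w ∈ ∂^exΛ : w ∼ u}|`,
and `Δ^g(g,g) = −|∂^in Λ|`. -/
def negLapG (Λ : Finset (Vtx d)) : GVtx d → GVtx d → ℝ
  | some u, some v => negLap d u v
  | some u, none => -(extNbrCount d Λ u : ℝ)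
  | none, some v => -(extNbrCount d Λ v : ℝ)
  | none, none => (inBdry d Λ).card

/-- `Λ^g = Λ ∪ {g}`. -/
def wiredSet (Λ : Finset (Vtx d)) : Finset (GVtx d) := insert none (Λ.image some)

/-- The quadratic form `∑_{u,v ∈ Λ^g} ψ_u (−Δ^g)(u,v) ψ̄_v`. -/
def pinQuad (Λ : Finset (Vtx d)) : GA d :=
  ∑ u ∈ wiredSet d Λ, ∑ v ∈ wiredSet d Λ,
    negLapG d Λ u v • (psi d u * psibar d v)

/-- The unnormalized *pinned* fGFF state, as an element of the Grassmann algebra. -/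
def pstate (Λ : Finset (Vtx d)) (F : GA d) : GA d :=
  berezin d (wiredSet d Λ)
    (psi d none * psibar d none *
      gexp d (pinQuad d Λ + psi d none * psibar d none) * F)


/-! ### Auxiliary general lemmas -/

section RingLemmas
variable {R : Type*} [Ring R]

private lemma sp_swap3 {x y : R} (h : x * y = -(y * x)) (z : R) :
    x * (y * z) = -(y * (x * z)) := by
  rw [← mul_assoc, h, neg_mul, mul_assoc]

private lemma sp_comm4 {a b c e : R} (hac : a * c = -(c * a)) (hae : a * e = -(e * a))
    (hbc : b * c = -(c * b)) (hbe : b * e = -(e * b)) : Commute (a * b) (c * e) := by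
  show a * b * (c * e) = c * e * (a * b)
  calc a * b * (c * e) = a * (b * (c * e)) := by rw [mul_assoc]
    _ = a * (-(c * (b * e))) := by rw [sp_swap3 hbc]
    _ = -(a * (c * (b * e))) := by rw [mul_neg]
    _ = -(-(c * (a * (b * e)))) := by rw [sp_swap3 hac]
    _ = c * (a * (b * e)) := by rw [neg_neg]
    _ = c * (a * (-(e * b))) := by rw [hbe]
    _ = -(c * (a * (e * b))) := by rw [mul_neg, mul_neg]
    _ = -(c * (-(e * (a * b)))) := by rw [sp_swap3 hae]
    _ = c * (e * (a * b)) := by rw [mul_neg, neg_neg]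
    _ = c * e * (a * b) := by rw [mul_assoc]

private lemma sp_zero4l {a b : R} (haa : a * a = 0) (hab : a * b = -(b * a)) (c : R) :
    a * b * (a * c) = 0 := by
  calc a * b * (a * c) = a * (b * (a * c)) := by rw [mul_assoc]
    _ = -(b * (a * (a * c))) := sp_swap3 hab _
    _ = -(b * (a * a * c)) := by rw [← mul_assoc a a c]
    _ = 0 := by rw [haa, zero_mul, mul_zero, neg_zero]

private lemma sp_zero4r {a b c : R} (hbb : b * b = 0) (hcb : c * b = -(b * c)) :
    a * b * (c * b) = 0 := by
  have h1 : b * (c * b) = -(c * (b * b)) := sp_swap3 (by rw [hcb, neg_neg]) b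
  calc a * b * (c * b) = a * (b * (c * b)) := by rw [mul_assoc]
    _ = a * (-(c * (b * b))) := by rw [h1]
    _ = 0 := by rw [hbb, mul_zero, neg_zero, mul_zero]

end RingLemmas

/-- Anticommutation of exterior-algebra generators. -/
private lemma sp_ia {R M : Type*} [CommRing R] [AddCommGroup M] [Module R M] (x y : M) :
    ExteriorAlgebra.ι R x * ExteriorAlgebra.ι R y
      = -(ExteriorAlgebra.ι R y * ExteriorAlgebra.ι R x) :=
  eq_neg_of_add_eq_zero_left (ExteriorAlgebra.ι_add_mul_swap x y)

/-! ### Specialized lemmas -/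

/-- Two products of pairs of generators commute. -/
lemma gen2_commute (m1 m2 m3 m4 : (GVtx d ⊕ GVtx d) → ℝ) :
    Commute (ExteriorAlgebra.ι ℝ m1 * ExteriorAlgebra.ι ℝ m2)
      (ExteriorAlgebra.ι ℝ m3 * ExteriorAlgebra.ι ℝ m4) :=
  sp_comm4 (sp_ia _ _) (sp_ia _ _) (sp_ia _ _) (sp_ia _ _)

lemma quad_term_commute (c c' : ℝ) (u v a b : GVtx d) :
    Commute (c • (psi d u * psibar d v)) (c' • (psi d a * psibar d b)) :=
  ((gen2_commute d _ _ _ _).smul_left c).smul_right c'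

lemma quad_term_sq (c : ℝ) (u v : GVtx d) :
    (c • (psi d u * psibar d v)) * (c • (psi d u * psibar d v)) = 0 := by
  rw [smul_mul_smul_comm]
  have h0 : psi d u * psibar d v * (psi d u * psibar d v) = 0 :=
    sp_zero4l (ExteriorAlgebra.ι_sq_zero _) (sp_ia _ _) _
  rw [h0, smul_zero]

lemma quad_sum_nilpotent {ι : Type*} (s : Finset ι) (c : ι → ℝ) (f g : ι → GVtx d) :
    IsNilpotent (∑ i ∈ s, c i • (psi d (f i) * psibar d (g i))) :=
  Commute.isNilpotent_sum
    (fun i _ => ⟨2, by rw [pow_two, quad_term_sq]⟩)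
    (fun i j _ _ => quad_term_commute d _ _ _ _ _ _)

lemma dirQuad_nilpotent (Λ : Finset (Vtx d)) : IsNilpotent (dirQuad d Λ) := by
  have : dirQuad d Λ = ∑ p ∈ Λ ×ˢ Λ, negLap d p.1 p.2 •
      (psi d (some p.1) * psibar d (some p.2)) := by
    rw [Finset.sum_product, dirQuad]
  rw [this]
  exact quad_sum_nilpotent d _ _ _ _

lemma pinQuad_nilpotent (Λ : Finset (Vtx d)) : IsNilpotent (pinQuad d Λ) := by
  have : pinQuad d Λ = ∑ p ∈ wiredSet d Λ ×ˢ wiredSet d Λ, negLapG d Λ p.1 p.2 •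
      (psi d p.1 * psibar d p.2) := by
    rw [Finset.sum_product, pinQuad]
  rw [this]
  exact quad_sum_nilpotent d _ _ _ _

lemma P_sq (Λ : Finset (Vtx d)) :
    (psi d none * psibar d none) * (psi d none * psibar d none) = 0 :=
  sp_zero4l (ExteriorAlgebra.ι_sq_zero _) (sp_ia _ _) _

lemma commute_quadterm_P (c : ℝ) (u v : GVtx d) :
    Commute (c • (psi d u * psibar d v)) (psi d none * psibar d none) :=
  (gen2_commute d _ _ _ _).smul_left c

lemma gexp_eq_sum {n : ℕ} {X : GA d} (h : X ^ n = 0) :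
    gexp d X = ∑ k ∈ Finset.range n, (k.factorial : ℝ)⁻¹ • X ^ k := by
  apply finsum_eq_sum_of_support_subset
  intro k hk
  simp only [Finset.coe_range, Set.mem_Iio]
  by_contra hlt
  push_neg at hlt
  refine hk ?_
  show (k.factorial : ℝ)⁻¹ • X ^ k = 0
  rw [pow_eq_zero_of_le hlt h, smul_zero]

/-- `P * gexp R = P * gexp Q` given `P R = P Q` and commutation. -/
lemma mul_gexp_eq {P Q R : GA d} (hQnil : IsNilpotent Q) (hRnil : IsNilpotent R)
    (hPR : P * R = P * Q) (hPQ : Commute P Q) :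
    P * gexp d R = P * gexp d Q := by
  obtain ⟨n, hn⟩ := hQnil
  obtain ⟨m, hm⟩ := hRnil
  have hn' : Q ^ max n m = 0 := pow_eq_zero_of_le (le_max_left _ _) hn
  have hm' : R ^ max n m = 0 := pow_eq_zero_of_le (le_max_right _ _) hm
  have hk : ∀ k : ℕ, P * R ^ k = P * Q ^ k := by
    intro k
    induction k with
    | zero => rw [pow_zero, pow_zero]
    | succ k ih =>
      calc P * R ^ (k + 1) = P * R * R ^ k := by rw [pow_succ', mul_assoc]
        _ = P * Q * R ^ k := by rw [hPR]
        _ = Q * (P * R ^ k) := by rw [hPQ.eq, mul_assoc]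
        _ = Q * (P * Q ^ k) := by rw [ih]
        _ = P * Q * Q ^ k := by rw [← mul_assoc, ← hPQ.eq]
        _ = P * Q ^ (k + 1) := by rw [pow_succ', mul_assoc]
  rw [gexp_eq_sum d hm', gexp_eq_sum d hn', Finset.mul_sum, Finset.mul_sum]
  exact Finset.sum_congr rfl fun k _ => by rw [mul_smul_comm, mul_smul_comm, hk]

lemma P_mul_psi_none_left (c : ℝ) (v : GVtx d) :
    (psi d none * psibar d none) * (c • (psi d none * psibar d v)) = 0 := by
  rw [mul_smul_comm]
  have h0 : psi d none * psibar d none * (psi d none * psibar d v) = 0 :=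
    sp_zero4l (ExteriorAlgebra.ι_sq_zero _) (sp_ia _ _) _
  rw [h0, smul_zero]

lemma P_mul_psibar_none_right (c : ℝ) (u : GVtx d) :
    (psi d none * psibar d none) * (c • (psi d u * psibar d none)) = 0 := by
  rw [mul_smul_comm]
  have h0 : psi d none * psibar d none * (psi d u * psibar d none) = 0 :=
    sp_zero4r (ExteriorAlgebra.ι_sq_zero _) (sp_ia _ _)
  rw [h0, smul_zero]

/-- Multiplying the pinned quadratic form by `ψ_g ψ̄_g` kills all ghost terms. -/
lemma P_mul_pinQuad (Λ : Finset (Vtx d)) :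
    (psi d none * psibar d none) * (pinQuad d Λ + psi d none * psibar d none)
      = (psi d none * psibar d none) * dirQuad d Λ := by
  classical
  have hnS : (none : GVtx d) ∉ Λ.image some := by simp
  set P : GA d := psi d none * psibar d none with hP
  rw [mul_add, P_sq d Λ, add_zero]
  have hsplit : pinQuad d Λ
      = (∑ v ∈ wiredSet d Λ, negLapG d Λ none v • (psi d none * psibar d v))
        + ∑ u ∈ Λ.image some,
            (negLapG d Λ u none • (psi d u * psibar d none)
              + ∑ v ∈ Λ.image some, negLapG d Λ u v • (psi d u * psibar d v)) := by
    rw [pinQuad]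
    rw [show wiredSet d Λ = insert none (Λ.image some) from rfl, Finset.sum_insert hnS]
    congr 1
    refine Finset.sum_congr rfl fun u _ => ?_
    rw [Finset.sum_insert hnS]
  rw [hsplit, mul_add, Finset.mul_sum]
  have h1 : ∑ v ∈ wiredSet d Λ, P * (negLapG d Λ none v • (psi d none * psibar d v)) = 0 :=
    Finset.sum_eq_zero fun v _ => P_mul_psi_none_left d _ _
  rw [h1, zero_add, Finset.mul_sum]
  have h2 : ∀ u ∈ Λ.image some,
      P * (negLapG d Λ u none • (psi d u * psibar d none)
            + ∑ v ∈ Λ.image some, negLapG d Λ u v • (psi d u * psibar d v))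
      = ∑ v ∈ Λ.image some, P * (negLapG d Λ u v • (psi d u * psibar d v)) := by
    intro u _
    rw [mul_add, P_mul_psibar_none_right d _ _, zero_add, Finset.mul_sum]
  rw [Finset.sum_congr rfl h2]
  have hinj : ∀ x ∈ Λ, ∀ y ∈ Λ, (some x : GVtx d) = some y → x = y :=
    fun x _ y _ h => Option.some_injective _ h
  rw [Finset.sum_image hinj]
  rw [dirQuad, Finset.mul_sum]
  refine Finset.sum_congr rfl fun u _ => ?_
  rw [Finset.sum_image hinj, Finset.mul_sum]
  exact Finset.sum_congr rfl fun v _ => rfl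

lemma commute_P_dirQuad (Λ : Finset (Vtx d)) :
    Commute (psi d none * psibar d none) (dirQuad d Λ) := by
  apply Commute.sum_right
  intro u _
  apply Commute.sum_right
  intro v _
  exact (commute_quadterm_P d _ _ _).symm

/-- Contraction by a ghost functional vanishes on the Λ-subalgebra. -/
lemma der_ι_mul (a : GVtx d ⊕ GVtx d) (m : (GVtx d ⊕ GVtx d) → ℝ) (b : GA d) :
    der d a (ExteriorAlgebra.ι ℝ m * b) = m a • b - ExteriorAlgebra.ι ℝ m * der d a b :=
  CliffordAlgebra.contractLeft_ι_mul (Q := (0 : QuadraticForm ℝ ((GVtx d ⊕ GVtx d) → ℝ)))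
    (LinearMap.proj a) m b

lemma der_adjoin_zero (Λ : Finset (Vtx d)) (x : GVtx d ⊕ GVtx d)
    (hx1 : ∀ v : Vtx d, x ≠ Sum.inl (some v)) (hx2 : ∀ v : Vtx d, x ≠ Sum.inr (some v))
    {y : GA d} (hy : y ∈ Algebra.adjoin ℝ
      {z : GA d | ∃ v ∈ Λ, z = psi d (some v) ∨ z = psibar d (some v)}) :
    der d x y = 0 := by
  have key : ∀ z ∈ {z : GA d | ∃ v ∈ Λ, z = psi d (some v) ∨ z = psibar d (some v)},
      ∃ m : (GVtx d ⊕ GVtx d) → ℝ, z = ExteriorAlgebra.ι ℝ m ∧ m x = 0 := by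
    rintro z ⟨v, hv, (rfl | rfl)⟩
    · exact ⟨Pi.single (Sum.inl (some v)) 1, rfl, Pi.single_eq_of_ne (hx1 v) 1⟩
    · exact ⟨Pi.single (Sum.inr (some v)) 1, rfl, Pi.single_eq_of_ne (hx2 v) 1⟩
  suffices h : ∀ b : GA d, der d x b = 0 → der d x (y * b) = 0 by
    have h1 : der d x (1 : GA d) = 0 := CliffordAlgebra.contractLeft_one _ _
    have := h 1 h1
    rwa [mul_one] at this
  induction hy using Algebra.adjoin_induction with
  | mem z hz =>
    obtain ⟨m, rfl, hm⟩ := key z hz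
    intro b hb
    rw [der_ι_mul, hm, zero_smul, zero_sub, hb, mul_zero, neg_zero]
  | algebraMap r =>
    intro b hb
    rw [← Algebra.smul_def, LinearMap.map_smul, hb, smul_zero]
  | add z w hz hw ihz ihw =>
    intro b hb
    rw [add_mul, LinearMap.map_add, ihz b hb, ihw b hb, add_zero]
  | mul z w hz hw ihz ihw =>
    intro b hb
    rw [mul_assoc]
    exact ihz _ (ihw b hb)

lemma dirQuad_mem_adjoin (Λ : Finset (Vtx d)) :
    dirQuad d Λ ∈ Algebra.adjoin ℝ
      {z : GA d | ∃ v ∈ Λ, z = psi d (some v) ∨ z = psibar d (some v)} := by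
  refine Subalgebra.sum_mem _ fun u hu => Subalgebra.sum_mem _ fun v hv =>
    Subalgebra.smul_mem _ (mul_mem ?_ ?_) _
  · exact Algebra.subset_adjoin ⟨u, hu, Or.inl rfl⟩
  · exact Algebra.subset_adjoin ⟨v, hv, Or.inr rfl⟩

lemma gexp_dirQuad_mem_adjoin (Λ : Finset (Vtx d)) :
    gexp d (dirQuad d Λ) ∈ Algebra.adjoin ℝ
      {z : GA d | ∃ v ∈ Λ, z = psi d (some v) ∨ z = psibar d (some v)} := by
  obtain ⟨n, hn⟩ := dirQuad_nilpotent d Λ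
  rw [gexp_eq_sum d hn]
  exact Subalgebra.sum_mem _ fun k _ =>
    Subalgebra.smul_mem _ (pow_mem (dirQuad_mem_adjoin d Λ) k) _

lemma anti_der (x y : GVtx d ⊕ GVtx d) : der d x * der d y = -(der d y * der d x) := by
  apply LinearMap.ext
  intro z
  exact CliffordAlgebra.contractLeft_comm (Q := (0 : QuadraticForm ℝ _)) _ _ z

lemma D_commute (u v : GVtx d) : Commute (D d u) (D d v) :=
  sp_comm4 (anti_der d _ _) (anti_der d _ _) (anti_der d _ _) (anti_der d _ _)

lemma pairwise_D_commute (l : List (GVtx d)) : (l.map (D d)).Pairwise Commute := by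
  induction l with
  | nil => exact List.Pairwise.nil
  | cons a l ih =>
    rw [List.map_cons, List.pairwise_cons]
    exact ⟨fun b hb => by
      obtain ⟨c, _, rfl⟩ := List.mem_map.mp hb
      exact D_commute d a c, ih⟩

lemma berezin_insert_none (S : Finset (GVtx d)) (hnS : (none : GVtx d) ∉ S) :
    berezin d (insert none S) = berezin d S * D d none := by
  have hperm : List.Perm ((insert (none : GVtx d) S).toList.map (D d))
      ((S.toList.map (D d)) ++ [D d none]) := by
    refine ((Finset.toList_insert hnS).map (D d)).trans ?_
    rw [List.map_cons]
    exact (List.perm_append_singleton _ _).symm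
  rw [berezin, hperm.prod_eq' (pairwise_D_commute d _), List.prod_append,
    List.prod_singleton, berezin]

lemma D_none_ghost (G : GA d) (h1 : der d (Sum.inl none) G = 0)
    (h2 : der d (Sum.inr none) G = 0) :
    D d none (psi d none * psibar d none * G) = G := by
  have hin : der d (Sum.inl none) (psi d none * psibar d none * G) = psibar d none * G := by
    rw [mul_assoc]
    show der d (Sum.inl none)
      (ExteriorAlgebra.ι ℝ (Pi.single (Sum.inl (none : GVtx d)) 1) * (psibar d none * G))
      = psibar d none * G
    rw [der_ι_mul]
    have hz : der d (Sum.inl none) (psibar d none * G) = 0 := by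
      show der d (Sum.inl none)
        (ExteriorAlgebra.ι ℝ (Pi.single (Sum.inr (none : GVtx d)) 1) * G) = 0
      rw [der_ι_mul, h1, mul_zero, sub_zero, Pi.single_eq_of_ne (by simp), zero_smul]
    rw [hz, mul_zero, sub_zero, Pi.single_eq_same, one_smul]
  show der d (Sum.inr none) (der d (Sum.inl none) (psi d none * psibar d none * G)) = G
  rw [hin]
  show der d (Sum.inr none)
    (ExteriorAlgebra.ι ℝ (Pi.single (Sum.inr (none : GVtx d)) 1) * G) = G
  rw [der_ι_mul, h2, mul_zero, sub_zero, Pi.single_eq_same, one_smul]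

/-- **Pinned = Dirichlet on Λ-observables** (Lemma 4.1 of the paper): the pinned and
the Dirichlet unnormalized fermionic Gaussian free field states agree on every `F` in
the subalgebra generated by `{ψ_v, ψ̄_v : v ∈ Λ}`. -/
theorem pstate_eq_dstate (hd : 2 ≤ d) (Λ : Finset (Vtx d)) (F : GA d)
    (hF : F ∈ Algebra.adjoin ℝ
      {x : GA d | ∃ v ∈ Λ, x = psi d (some v) ∨ x = psibar d (some v)}) :
    pstate d Λ F = dstate d Λ F := by
  classical
  have hnS : (none : GVtx d) ∉ Λ.image some := by simp
  set A := Algebra.adjoin ℝ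
    {z : GA d | ∃ v ∈ Λ, z = psi d (some v) ∨ z = psibar d (some v)} with hA
  set P : GA d := psi d none * psibar d none with hPdef
  set Q : GA d := dirQuad d Λ with hQdef
  have hPnil : IsNilpotent P := ⟨2, by rw [pow_two]; exact P_sq d Λ⟩
  have hRnil : IsNilpotent (pinQuad d Λ + P) := by
    refine Commute.isNilpotent_add ?_ (pinQuad_nilpotent d Λ) hPnil
    apply Commute.sum_left
    intro u _
    apply Commute.sum_left
    intro v _
    exact commute_quadterm_P d _ _ _
  have hclaimA : P * gexp d (pinQuad d Λ + P) = P * gexp d Q :=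
    mul_gexp_eq d (dirQuad_nilpotent d Λ) hRnil (P_mul_pinQuad d Λ) (commute_P_dirQuad d Λ)
  have hGmem : gexp d Q * F ∈ A := mul_mem (gexp_dirQuad_mem_adjoin d Λ) hF
  have hG1 : der d (Sum.inl none) (gexp d Q * F) = 0 :=
    der_adjoin_zero d Λ _ (fun v h => by simp at h) (fun v h => by simp at h) hGmem
  have hG2 : der d (Sum.inr none) (gexp d Q * F) = 0 :=
    der_adjoin_zero d Λ _ (fun v h => by simp at h) (fun v h => by simp at h) hGmem
  have hint : P * gexp d (pinQuad d Λ + P) * F = P * (gexp d Q * F) := by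
    rw [hclaimA, mul_assoc]
  rw [pstate, show wiredSet d Λ = insert none (Λ.image some) from rfl,
    berezin_insert_none d _ hnS]
  show berezin d (Λ.image some) (D d none (P * gexp d (pinQuad d Λ + P) * F)) = _
  rw [hint, hPdef, D_none_ghost d _ hG1 hG2]
  rfl

end Sandpile
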